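/- arXiv:1508.07267 — 2 statements merged into one kernel-verified Lean document; each statement's English description precedes it below -/
import Mathlib

section
/- Let X_1,...,X_n be independent nonnegative random variables with order statistics X_[n] ≤ ... ≤ X_[1]. Then E[X_[1]] · E[X_[2]] ≤ E[X_[1] X_[2]] ≤ (E[X_[1]])² ≤ E[X_[1]²], where the middle inequality follows from the functional BKR inequality. -/
open MeasureTheory ENNReal

set_option linter.unusedVariables false

/-- `f` depends (only) on the coordinates in `K`. -/
def DepOn {n : ℕ} (f : (Fin n → ℝ) → ℝ≥0∞) (K : Finset (Fin n)) : Prop :=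
  ∀ x y : Fin n → ℝ, (∀ i ∈ K, x i = y i) → f x = f y

/-- The largest value among the coordinates of `x`. -/
noncomputable def ord1 {n : ℕ} (x : Fin n → ℝ) : ℝ := ⨆ i, x i

/-- The second largest value among the coordinates of `x`. -/
noncomputable def ord2 {n : ℕ} (x : Fin n → ℝ) : ℝ :=
  ⨆ p : {p : Fin n × Fin n // p.1 ≠ p.2}, min (x p.1.1) (x p.1.2)

lemma rearr {a b c d : ℝ≥0∞} (hab : a ≤ b) (hcd : c ≤ d) :
    a * d + b * c ≤ a * c + b * d := by
  rcases eq_or_ne a ∞ with rfl | ha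
  · have hb : b = ∞ := top_le_iff.mp (le_of_eq (top_le_iff.mp hab).symm)
    subst hb; ring_nf; exact le_rfl
  · calc a * d + b * c = a * d + (a + (b - a)) * c := by rw [add_tsub_cancel_of_le hab]
    _ = a * c + (a * d + (b - a) * c) := by ring
    _ ≤ a * c + (a * d + (b - a) * d) := by
        gcongr
    _ = a * c + b * d := by
        rw [← add_mul, add_tsub_cancel_of_le hab]

/-- 1D Chebyshev correlation inequality. -/
lemma cheb1 (ν : Measure ℝ) [IsProbabilityMeasure ν] {f g : ℝ → ℝ≥0∞}
    (hf : Measurable f) (hg : Measurable g) (hfm : Monotone f) (hgm : Monotone g) :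
    (∫⁻ t, f t ∂ν) * ∫⁻ t, g t ∂ν ≤ ∫⁻ t, f t * g t ∂ν := by
  have key : ∀ x y : ℝ, f x * g y + f y * g x ≤ f x * g x + f y * g y := by
    intro x y
    rcases le_total x y with h | h
    · exact rearr (hfm h) (hgm h)
    · rw [add_comm (f x * g y), add_comm (f x * g x)]
      exact rearr (hfm h) (hgm h)
  have h2 : (∫⁻ t, f t ∂ν) * (∫⁻ t, g t ∂ν) + (∫⁻ t, f t ∂ν) * (∫⁻ t, g t ∂ν)
      ≤ (∫⁻ t, f t * g t ∂ν) + ∫⁻ t, f t * g t ∂ν := by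
    have l1 : (∫⁻ x, ∫⁻ y, f x * g y + f y * g x ∂ν ∂ν)
        = (∫⁻ t, f t ∂ν) * (∫⁻ t, g t ∂ν) + (∫⁻ t, f t ∂ν) * (∫⁻ t, g t ∂ν) := by
      have : ∀ x, (∫⁻ y, f x * g y + f y * g x ∂ν)
          = f x * (∫⁻ t, g t ∂ν) + (∫⁻ t, f t ∂ν) * g x := by
        intro x
        rw [lintegral_add_left (hg.const_mul _), lintegral_const_mul _ hg,
          lintegral_mul_const _ hf]
      simp_rw [this]
      rw [lintegral_add_left (hf.mul_const _), lintegral_mul_const _ hf,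
        lintegral_const_mul _ hg]
    have l2 : (∫⁻ x, ∫⁻ y, f x * g x + f y * g y ∂ν ∂ν)
        = (∫⁻ t, f t * g t ∂ν) + ∫⁻ t, f t * g t ∂ν := by
      have : ∀ x, (∫⁻ y, f x * g x + f y * g y ∂ν) = f x * g x + ∫⁻ t, f t * g t ∂ν := by
        intro x
        rw [lintegral_add_left measurable_const, lintegral_const, measure_univ, mul_one]
      simp_rw [this]
      rw [lintegral_add_right _ measurable_const, lintegral_const, measure_univ, mul_one]
    rw [← l1, ← l2]
    exact lintegral_mono fun x => lintegral_mono fun y => key x y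
  by_contra hc
  push_neg at hc
  exact absurd h2 (not_le.mpr (ENNReal.add_lt_add hc hc))

/-- Harris/FKG inequality for product measures: monotone functions correlate positively. -/
lemma harris : ∀ (n : ℕ) (μ : Fin n → Measure ℝ), (∀ i, IsProbabilityMeasure (μ i)) →
    ∀ f g : (Fin n → ℝ) → ℝ≥0∞, Measurable f → Measurable g → Monotone f → Monotone g →
    (∫⁻ x, f x ∂Measure.pi μ) * ∫⁻ x, g x ∂Measure.pi μ ≤ ∫⁻ x, f x * g x ∂Measure.pi μ := by
  intro n
  induction n with
  | zero =>
    intro μ hμ f g hf hg hfm hgm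
    haveI := hμ
    have hfc : f = fun _ => f default := funext fun x => congrArg f (Subsingleton.elim _ _)
    have hgc : g = fun _ => g default := funext fun x => congrArg g (Subsingleton.elim _ _)
    rw [hfc, hgc]
    simp [lintegral_const]
  | succ n ih =>
    intro μ hμ f g hf hg hfm hgm
    haveI := hμ
    set ν : Fin n → Measure ℝ := fun j => μ ((0 : Fin (n + 1)).succAbove j) with hν
    haveI : ∀ j, IsProbabilityMeasure (ν j) := fun j => hμ _
    set e := MeasurableEquiv.piFinSuccAbove (fun _ : Fin (n + 1) => ℝ) 0 with he
    have mp := (measurePreserving_piFinSuccAbove μ 0).symm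
    have hins : ∀ (t : ℝ) (y : Fin n → ℝ), e.symm (t, y) = Fin.insertNth 0 t y := by
      intro t y; rfl
    have hinsm : Measurable fun z : ℝ × (Fin n → ℝ) => (Fin.insertNth 0 z.1 z.2 : Fin (n+1) → ℝ) := by
      have : (fun z : ℝ × (Fin n → ℝ) => (Fin.insertNth 0 z.1 z.2 : Fin (n+1) → ℝ))
          = fun z => e.symm z := by funext z; rw [hins z.1 z.2]
      rw [this]; exact e.symm.measurable
    have key : ∀ F : (Fin (n + 1) → ℝ) → ℝ≥0∞, Measurable F →
        (∫⁻ x, F x ∂Measure.pi μ)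
          = ∫⁻ t, ∫⁻ y, F (Fin.insertNth 0 t y) ∂Measure.pi ν ∂μ 0 := by
      intro F hF
      rw [← mp.lintegral_comp hF]
      exact lintegral_prod _ ((hF.comp hinsm).aemeasurable)
    have hmono : ∀ (t : ℝ), Monotone fun y : Fin n → ℝ => (Fin.insertNth 0 t y : Fin (n+1) → ℝ) := by
      intro t y y' hyy j
      refine Fin.cases ?_ (fun k => ?_) j
      · simp
      · simpa using hyy k
    have hmono' : ∀ (y : Fin n → ℝ), Monotone fun t : ℝ => (Fin.insertNth 0 t y : Fin (n+1) → ℝ) := by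
      intro y t t' htt j
      refine Fin.cases ?_ (fun k => ?_) j
      · simpa using htt
      · simp
    set F₁ : ℝ → ℝ≥0∞ := fun t => ∫⁻ y, f (Fin.insertNth 0 t y) ∂Measure.pi ν with hF₁
    set G₁ : ℝ → ℝ≥0∞ := fun t => ∫⁻ y, g (Fin.insertNth 0 t y) ∂Measure.pi ν with hG₁
    have hF₁m : Measurable F₁ := Measurable.lintegral_prod_right (hf.comp hinsm)
    have hG₁m : Measurable G₁ := Measurable.lintegral_prod_right (hg.comp hinsm)
    have hF₁mono : Monotone F₁ := fun t t' h =>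
      lintegral_mono fun y => hfm (hmono' y h)
    have hG₁mono : Monotone G₁ := fun t t' h =>
      lintegral_mono fun y => hgm (hmono' y h)
    calc (∫⁻ x, f x ∂Measure.pi μ) * ∫⁻ x, g x ∂Measure.pi μ
        = (∫⁻ t, F₁ t ∂μ 0) * ∫⁻ t, G₁ t ∂μ 0 := by rw [key f hf, key g hg]
      _ ≤ ∫⁻ t, F₁ t * G₁ t ∂μ 0 := cheb1 (μ 0) hF₁m hG₁m hF₁mono hG₁mono
      _ ≤ ∫⁻ t, ∫⁻ y, f (Fin.insertNth 0 t y) * g (Fin.insertNth 0 t y) ∂Measure.pi ν ∂μ 0 := by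
          refine lintegral_mono fun t => ?_
          exact ih ν (fun j => hμ _) _ _
            (hf.comp (hinsm.comp measurable_prodMk_left))
            (hg.comp (hinsm.comp measurable_prodMk_left))
            (fun y y' h => hfm (hmono t h)) (fun y y' h => hgm (hmono t h))
      _ = ∫⁻ x, f x * g x ∂Measure.pi μ := (key _ (hf.mul hg)).symm

lemma ord_attain {n : ℕ} (hn : 2 ≤ n) (x : Fin n → ℝ) :
    ∃ i j, j ≠ i ∧ ord1 x = x i ∧ ord2 x = x j ∧ (∀ k, x k ≤ x i) ∧ (∀ k, k ≠ i → x k ≤ x j) := by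
  haveI : NeZero n := ⟨by omega⟩
  haveI : Nontrivial (Fin n) := Fin.nontrivial_iff_two_le.mpr hn
  obtain ⟨i, hi⟩ := Finite.exists_max x
  obtain ⟨j0, hj0⟩ := exists_ne i
  haveI : Nonempty {k : Fin n // k ≠ i} := ⟨⟨j0, hj0⟩⟩
  obtain ⟨⟨j, hj⟩, hjmax⟩ := Finite.exists_max (fun k : {k : Fin n // k ≠ i} => x k.1)
  refine ⟨i, j, hj, ?_, ?_, hi, fun k hk => hjmax ⟨k, hk⟩⟩
  · exact le_antisymm (ciSup_le hi) (le_ciSup (Set.Finite.bddAbove (Set.finite_range x)) i)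
  · haveI : Nonempty {p : Fin n × Fin n // p.1 ≠ p.2} := ⟨⟨(i, j), Ne.symm hj⟩⟩
    refine le_antisymm (ciSup_le fun p => ?_) ?_
    · rcases eq_or_ne p.1.1 i with h1 | h1
      · have h2 : p.1.2 ≠ i := h1 ▸ (Ne.symm p.2)
        exact le_trans (min_le_right _ _) (hjmax ⟨p.1.2, h2⟩)
      · exact le_trans (min_le_left _ _) (hjmax ⟨p.1.1, h1⟩)
    · have hb : BddAbove (Set.range fun p : {p : Fin n × Fin n // p.1 ≠ p.2} =>
          min (x p.1.1) (x p.1.2)) := Set.Finite.bddAbove (Set.finite_range _)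
      have := le_ciSup hb (⟨(i, j), Ne.symm hj⟩ : {p : Fin n × Fin n // p.1 ≠ p.2})
      simp only [min_eq_right (hi j)] at this
      exact this

lemma ord1_meas {n : ℕ} : Measurable (ord1 (n := n)) :=
  Measurable.iSup fun i => measurable_pi_apply i

lemma ord2_meas {n : ℕ} : Measurable (ord2 (n := n)) :=
  Measurable.iSup fun p => (measurable_pi_apply _).min (measurable_pi_apply _)

lemma ord1_mono {n : ℕ} [NeZero n] : Monotone (ord1 (n := n)) := fun x y hxy =>
  ciSup_le fun i => le_trans (hxy i) (le_ciSup (Set.Finite.bddAbove (Set.finite_range y)) i)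

lemma ord2_mono {n : ℕ} (hn : 2 ≤ n) : Monotone (ord2 (n := n)) := by
  intro x y hxy
  haveI : Nontrivial (Fin n) := Fin.nontrivial_iff_two_le.mpr hn
  obtain ⟨a, b, hab⟩ := exists_pair_ne (Fin n)
  haveI : Nonempty {p : Fin n × Fin n // p.1 ≠ p.2} := ⟨⟨(a, b), hab⟩⟩
  refine ciSup_le fun p => ?_
  exact le_trans (min_le_min (hxy _) (hxy _))
    (le_ciSup (f := fun p : {p : Fin n × Fin n // p.1 ≠ p.2} => min (y p.1.1) (y p.1.2))
      (Set.Finite.bddAbove (Set.finite_range _)) p)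

/-- For independent nonnegative random variables `X_1, …, X_n` (joint law a product
measure `Measure.pi μ` on `Fin n → ℝ`, supported on nonnegative reals), with order
statistics `X_[1] ≥ X_[2] ≥ …`, the chain
`E[X_[1]] E[X_[2]] ≤ E[X_[1] X_[2]] ≤ (E[X_[1]])² ≤ E[X_[1]²]` holds, the middle
inequality coming from the functional BKR inequality (assumed as a hypothesis). -/

theorem order_statistics_chain {n : ℕ} (hn : 2 ≤ n)
    (μ : Fin n → Measure ℝ) [∀ i, IsProbabilityMeasure (μ i)]
    (hpos : ∀ i, μ i (Set.Iio (0 : ℝ)) = 0)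
    (ha : ∀ (ι κ : Type) [Countable ι] [Countable κ]
      (f : ι → (Fin n → ℝ) → ℝ≥0∞) (g : κ → (Fin n → ℝ) → ℝ≥0∞)
      (K : ι → Finset (Fin n)) (L : κ → Finset (Fin n)),
      (∀ a, Measurable (f a)) → (∀ b, Measurable (g b)) →
      (∀ a, DepOn (f a) (K a)) → (∀ b, DepOn (g b) (L b)) →
      ∫⁻ x, ⨆ (a : ι) (b : κ) (_ : Disjoint (K a) (L b)), f a x * g b x
          ∂(Measure.pi μ) ≤
        (∫⁻ x, ⨆ a, f a x ∂(Measure.pi μ)) * ∫⁻ x, ⨆ b, g b x ∂(Measure.pi μ)) :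
    (∫⁻ x, ENNReal.ofReal (ord1 x) ∂(Measure.pi μ)) *
        (∫⁻ x, ENNReal.ofReal (ord2 x) ∂(Measure.pi μ)) ≤
      ∫⁻ x, ENNReal.ofReal (ord1 x * ord2 x) ∂(Measure.pi μ) ∧
    (∫⁻ x, ENNReal.ofReal (ord1 x * ord2 x) ∂(Measure.pi μ)) ≤
      (∫⁻ x, ENNReal.ofReal (ord1 x) ∂(Measure.pi μ)) ^ 2 ∧
    (∫⁻ x, ENNReal.ofReal (ord1 x) ∂(Measure.pi μ)) ^ 2 ≤
      ∫⁻ x, ENNReal.ofReal (ord1 x ^ 2) ∂(Measure.pi μ) := by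
  haveI : NeZero n := ⟨by omega⟩
  -- a.e. nonnegativity of all coordinates
  have hA : ∀ᵐ x ∂Measure.pi μ, ∀ i, 0 ≤ x i := by
    rw [ae_all_iff]
    intro i
    rw [ae_iff]
    have hs : {x : Fin n → ℝ | ¬ 0 ≤ x i} = Function.eval i ⁻¹' Set.Iio 0 := by
      ext x; simp [not_le, Function.eval]
    rw [hs]
    exact Measure.pi_eval_preimage_null _ (hpos i)
  have hf1 : Measurable fun x : Fin n → ℝ => ENNReal.ofReal (ord1 x) :=
    ENNReal.measurable_ofReal.comp ord1_meas
  have hf2 : Measurable fun x : Fin n → ℝ => ENNReal.ofReal (ord2 x) :=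
    ENNReal.measurable_ofReal.comp ord2_meas
  have hm1 : Monotone fun x : Fin n → ℝ => ENNReal.ofReal (ord1 x) :=
    fun x y h => ENNReal.ofReal_le_ofReal (ord1_mono h)
  have hm2 : Monotone fun x : Fin n → ℝ => ENNReal.ofReal (ord2 x) :=
    fun x y h => ENNReal.ofReal_le_ofReal (ord2_mono hn h)
  have hprod : ∫⁻ x, ENNReal.ofReal (ord1 x) * ENNReal.ofReal (ord2 x) ∂(Measure.pi μ)
      = ∫⁻ x, ENNReal.ofReal (ord1 x * ord2 x) ∂(Measure.pi μ) := by
    refine lintegral_congr_ae (hA.mono fun x hx => ?_)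
    obtain ⟨i, j, hij, h1, h2, hmax, _⟩ := ord_attain hn x
    dsimp only
    rw [ENNReal.ofReal_mul (by rw [h1]; exact hx i)]
  refine ⟨?_, ?_, ?_⟩
  · -- first inequality: Harris
    rw [← hprod]
    exact harris n μ (fun i => inferInstance) _ _ hf1 hf2 hm1 hm2
  · -- second inequality: BKR hypothesis
    have h2 := ha (Fin n) (Fin n) (fun a x => ENNReal.ofReal (x a))
      (fun b x => ENNReal.ofReal (x b)) (fun a => {a}) (fun b => {b})
      (fun a => ENNReal.measurable_ofReal.comp (measurable_pi_apply a))
      (fun b => ENNReal.measurable_ofReal.comp (measurable_pi_apply b))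
      (fun a x y h => by
        show ENNReal.ofReal (x a) = ENNReal.ofReal (y a)
        rw [h a (Finset.mem_singleton_self a)])
      (fun b x y h => by
        show ENNReal.ofReal (x b) = ENNReal.ofReal (y b)
        rw [h b (Finset.mem_singleton_self b)])
    have hsup : ∀ x : Fin n → ℝ, (⨆ a, ENNReal.ofReal (x a)) = ENNReal.ofReal (ord1 x) := by
      intro x
      obtain ⟨i, j, hij, h1, h2, hmax, _⟩ := ord_attain hn x
      rw [h1]
      exact le_antisymm (iSup_le fun a => ENNReal.ofReal_le_ofReal (hmax a))
        (le_iSup (fun a => ENNReal.ofReal (x a)) i)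
    have hle : ∫⁻ x, ENNReal.ofReal (ord1 x * ord2 x) ∂(Measure.pi μ)
        ≤ ∫⁻ x, ⨆ (a : Fin n) (b : Fin n)
            (_ : Disjoint ({a} : Finset (Fin n)) {b}),
            ENNReal.ofReal (x a) * ENNReal.ofReal (x b) ∂(Measure.pi μ) := by
      refine lintegral_mono_ae (hA.mono fun x hx => ?_)
      obtain ⟨i, j, hij, h1, h2, hmax, _⟩ := ord_attain hn x
      calc ENNReal.ofReal (ord1 x * ord2 x)
          = ENNReal.ofReal (x i) * ENNReal.ofReal (x j) := by
            rw [h1, h2, ENNReal.ofReal_mul (hx i)]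
        _ ≤ _ := by
            refine le_iSup_of_le i (le_iSup_of_le j (le_iSup_of_le ?_ le_rfl))
            exact Finset.disjoint_singleton.mpr (Ne.symm hij)
    calc ∫⁻ x, ENNReal.ofReal (ord1 x * ord2 x) ∂(Measure.pi μ)
        ≤ _ := hle
      _ ≤ (∫⁻ x, ⨆ a, ENNReal.ofReal (x a) ∂(Measure.pi μ)) *
          ∫⁻ x, ⨆ b, ENNReal.ofReal (x b) ∂(Measure.pi μ) := h2
      _ = (∫⁻ x, ENNReal.ofReal (ord1 x) ∂(Measure.pi μ)) ^ 2 := by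
          rw [lintegral_congr fun x => hsup x, sq]
  · -- third inequality: Cauchy–Schwarz (via Harris with f = g)
    have h3 := harris n μ (fun i => inferInstance) _ _ hf1 hf1 hm1 hm1
    rw [sq]
    refine le_trans h3 (lintegral_mono_ae (hA.mono fun x hx => ?_))
    obtain ⟨i, j, hij, h1, h2, hmax, _⟩ := ord_attain hn x
    have h0 : 0 ≤ ord1 x := by rw [h1]; exact hx i
    show ENNReal.ofReal (ord1 x) * ENNReal.ofReal (ord1 x) ≤ ENNReal.ofReal (ord1 x ^ 2)
    rw [← ENNReal.ofReal_mul h0, ← sq]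
end

section
/- For independent real-valued random variables X_1,...,X_n, X_[1] the maximum, Y_i independent copies of the X_i, and any t > 0: E[e^{t(X_[1]+X_[2])}] ≤ (E[e^{tX_[1]}])² = E[e^{t(X_[1]+Y_[1])}], assuming the functional BKR inequality (a). -/
open MeasureTheory ENNReal Real

/-- For independent real random variables `X_1, …, X_n` (joint law the product measure
`Measure.pi μ`), an independent copy `Y`, and `t > 0`, assuming the functional BKR
inequality (a): `E[e^{t(X_[1]+X_[2])}] ≤ (E[e^{tX_[1]}])² = E[e^{t(X_[1]+Y_[1])}]`,
where `e^{t(X_[1]+X_[2])} = max_{i ≠ j} e^{tX_i} e^{tX_j}` and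
`e^{tX_[1]} = max_i e^{tX_i}`. -/
theorem mgf_order_statistics {n : ℕ} (hn : 2 ≤ n) {t : ℝ} (ht : 0 < t)
    (μ : Fin n → Measure ℝ) [∀ i, IsProbabilityMeasure (μ i)]
    (ha : ∀ (ι κ : Type) [Countable ι] [Countable κ]
      (f : ι → (Fin n → ℝ) → ℝ≥0∞) (g : κ → (Fin n → ℝ) → ℝ≥0∞)
      (K : ι → Finset (Fin n)) (L : κ → Finset (Fin n)),
      (∀ a, Measurable (f a)) → (∀ b, Measurable (g b)) →
      (∀ a, DepOn (f a) (K a)) → (∀ b, DepOn (g b) (L b)) →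
      ∫⁻ x, ⨆ (a : ι) (b : κ) (_ : Disjoint (K a) (L b)), f a x * g b x
          ∂(Measure.pi μ) ≤
        (∫⁻ x, ⨆ a, f a x ∂(Measure.pi μ)) * ∫⁻ x, ⨆ b, g b x ∂(Measure.pi μ)) :
    (∫⁻ x, ⨆ (i : Fin n) (j : Fin n) (_ : i ≠ j),
        ENNReal.ofReal (exp (t * x i) * exp (t * x j)) ∂(Measure.pi μ)) ≤
      (∫⁻ x, ⨆ i, ENNReal.ofReal (exp (t * x i)) ∂(Measure.pi μ)) ^ 2 ∧
    (∫⁻ x, ⨆ i, ENNReal.ofReal (exp (t * x i)) ∂(Measure.pi μ)) ^ 2 =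
      ∫⁻ p, (⨆ i, ENNReal.ofReal (exp (t * p.1 i))) *
          ⨆ j, ENNReal.ofReal (exp (t * p.2 j))
        ∂((Measure.pi μ).prod (Measure.pi μ)) := by
  have mf : ∀ i : Fin n, Measurable (fun x : Fin n → ℝ => ENNReal.ofReal (exp (t * x i))) :=
    fun i => ENNReal.measurable_ofReal.comp
      (Real.measurable_exp.comp (measurable_const.mul (measurable_pi_apply i)))
  constructor
  · have h := ha (Fin n) (Fin n)
      (fun i x => ENNReal.ofReal (exp (t * x i)))
      (fun j x => ENNReal.ofReal (exp (t * x j)))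
      (fun i => {i}) (fun j => {j}) mf mf
      (fun i x y hxy => by dsimp only; rw [hxy i (Finset.mem_singleton_self i)])
      (fun j x y hxy => by dsimp only; rw [hxy j (Finset.mem_singleton_self j)])
    rw [sq]
    refine le_trans (le_of_eq ?_) h
    refine lintegral_congr fun x => ?_
    refine iSup_congr fun i => iSup_congr fun j => ?_
    rw [Finset.disjoint_singleton]
    exact iSup_congr fun _ => by exact ENNReal.ofReal_mul (exp_nonneg _)
  · rw [sq]
    exact (lintegral_prod_mul
      (Measurable.aemeasurable (Measurable.iSup mf))
      (Measurable.aemeasurable (Measurable.iSup mf))).symm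
end
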